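/- Let V be a separable Hilbert space and u, u₀, u₁, …, u_L ∈ L²(Ω;V) with u_{-1} := 0. Suppose ‖u − u_ℓ‖_{L²(Ω;V)} ≤ e_ℓ for each ℓ = 0, …, L and ‖u‖_{L²(Ω;V)} ≤ e_{-1}. For M₀, …, M_L ∈ ℕ let E^L := Σ_{ℓ=0}^L E_{M_ℓ}(u_ℓ − u_{ℓ-1}) be the multilevel Monte Carlo estimator built from independent Monte Carlo estimators of the corrections. Then ‖E[u] − E^L‖_{L²(Ω;V)} ≤ e_L + Σ_{ℓ=0}^L (e_ℓ + e_{ℓ-1})/√(M_ℓ). -/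

import Mathlib

set_option linter.unusedSectionVars false
set_option maxHeartbeats 1000000

open MeasureTheory ProbabilityTheory

section Aux

variable {Ω V : Type*} [MeasurableSpace Ω] {μ : Measure Ω} [IsProbabilityMeasure μ]
  [NormedAddCommGroup V] [InnerProductSpace ℝ V] [CompleteSpace V]
  [MeasurableSpace V] [BorelSpace V] [SecondCountableTopology V]

local notation "⟪" x ", " y "⟫" => @inner ℝ V _ x y

lemma mlmc_integrable_inner {f g : Ω → V} (hf : MemLp f 2 μ) (hg : MemLp g 2 μ) :
    Integrable (fun ω => ⟪f ω, g ω⟫) μ := by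
  have hmul : Integrable (fun ω => ‖f ω‖ * ‖g ω‖) μ := by
    have h := hg.norm.smul (φ := fun ω => ‖f ω‖) hf.norm
      (p := 2) (q := 2) (r := 1) (hpqr := ⟨by norm_num [ENNReal.inv_two_add_inv_two]⟩)
    rw [memLp_one_iff_integrable] at h
    simpa [smul_eq_mul, Pi.mul_def] using h
  refine hmul.mono' (hf.1.inner hg.1) (Filter.Eventually.of_forall fun ω => ?_)
  simpa using abs_real_inner_le_norm (f ω) (g ω)

lemma mlmc_norm_toLp {f : Ω → V} (hf : MemLp f 2 μ) :
    ‖hf.toLp f‖ = Real.sqrt (∫ ω, ‖f ω‖ ^ 2 ∂μ) := by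
  have h1 : (∫ ω, ‖f ω‖ ^ 2 ∂μ) = ‖hf.toLp f‖ ^ 2 := by
    rw [← real_inner_self_eq_norm_sq, L2.inner_def]
    refine integral_congr_ae ((hf.coeFn_toLp).mono fun ω hω => ?_)
    simp only [hω, real_inner_self_eq_norm_sq]
  rw [h1, Real.sqrt_sq (norm_nonneg _)]

lemma mlmc_sqrt_add_le {f g : Ω → V} (hf : MemLp f 2 μ) (hg : MemLp g 2 μ) :
    Real.sqrt (∫ ω, ‖f ω + g ω‖ ^ 2 ∂μ)
      ≤ Real.sqrt (∫ ω, ‖f ω‖ ^ 2 ∂μ) + Real.sqrt (∫ ω, ‖g ω‖ ^ 2 ∂μ) := by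
  have hfg : MemLp (f + g) 2 μ := hf.add hg
  have h1 : Real.sqrt (∫ ω, ‖f ω + g ω‖ ^ 2 ∂μ) = ‖hfg.toLp (f + g)‖ := by
    rw [mlmc_norm_toLp hfg]; rfl
  rw [h1, ← mlmc_norm_toLp hf, ← mlmc_norm_toLp hg, MemLp.toLp_add]
  exact norm_add_le _ _


lemma mlmc_sqrt_nonneg (f : Ω → V) : 0 ≤ Real.sqrt (∫ ω, ‖f ω‖ ^ 2 ∂μ) := Real.sqrt_nonneg _

lemma mlmc_sqrt_sum_le {ι : Type*} (s : Finset ι) (f : ι → Ω → V)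
    (hf : ∀ i ∈ s, MemLp (f i) 2 μ) :
    Real.sqrt (∫ ω, ‖∑ i ∈ s, f i ω‖ ^ 2 ∂μ)
      ≤ ∑ i ∈ s, Real.sqrt (∫ ω, ‖f i ω‖ ^ 2 ∂μ) := by
  classical
  induction s using Finset.induction_on with
  | empty => simp
  | @insert a s' hx ih =>
    have hfa : MemLp (f a) 2 μ := hf a (Finset.mem_insert_self _ _)
    have hfs : MemLp (fun ω => ∑ i ∈ s', f i ω) 2 μ := by
      have := memLp_finset_sum' (μ := μ) (p := 2) s'
        (f := fun i => f i) (fun i hi => hf i (Finset.mem_insert_of_mem hi))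
      have he : (∑ x ∈ s', f x) = fun ω => ∑ i ∈ s', f i ω := by
        funext ω; simp
      rwa [he] at this
    have h1 : (fun ω => ‖∑ i ∈ insert a s', f i ω‖ ^ 2)
        = fun ω => ‖f a ω + ∑ i ∈ s', f i ω‖ ^ 2 := by
      funext ω; rw [Finset.sum_insert hx]
    rw [Finset.sum_insert hx]
    calc Real.sqrt (∫ ω, ‖∑ i ∈ insert a s', f i ω‖ ^ 2 ∂μ)
        = Real.sqrt (∫ ω, ‖f a ω + ∑ i ∈ s', f i ω‖ ^ 2 ∂μ) := by rw [h1]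
      _ ≤ Real.sqrt (∫ ω, ‖f a ω‖ ^ 2 ∂μ)
            + Real.sqrt (∫ ω, ‖∑ i ∈ s', f i ω‖ ^ 2 ∂μ) := mlmc_sqrt_add_le hfa hfs
      _ ≤ _ := by
          gcongr
          exact ih fun i hi => hf i (Finset.mem_insert_of_mem hi)

lemma mlmc_norm_integral_le {f : Ω → V} (hf : MemLp f 2 μ) :
    ‖∫ ω, f ω ∂μ‖ ≤ Real.sqrt (∫ ω, ‖f ω‖ ^ 2 ∂μ) := by
  have h1 : ‖∫ ω, f ω ∂μ‖ ≤ ∫ ω, ‖f ω‖ ∂μ := norm_integral_le_integral_norm f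
  have h2 : (∫ ω, ‖f ω‖ ∂μ) ^ 2 ≤ ∫ ω, ‖f ω‖ ^ 2 ∂μ := by
    have hv := variance_nonneg (fun ω => ‖f ω‖) μ
    rw [variance_eq_sub hf.norm] at hv
    have : μ[(fun ω => ‖f ω‖) ^ 2] = ∫ ω, ‖f ω‖ ^ 2 ∂μ := by
      apply integral_congr_ae; filter_upwards with ω; simp
    rw [this] at hv
    linarith
  exact h1.trans (Real.le_sqrt_of_sq_le h2)

lemma mlmc_indep_integral_inner {X Z : Ω → V} (hXm : Measurable X) (hZm : Measurable Z)
    (hXi : Integrable X μ) (hZi : Integrable Z μ) (h : IndepFun X Z μ) :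
    ∫ ω, ⟪X ω, Z ω⟫ ∂μ = ⟪∫ ω, X ω ∂μ, ∫ ω, Z ω ∂μ⟫ := by
  have hmap : μ.map (fun ω => (X ω, Z ω)) = (μ.map X).prod (μ.map Z) :=
    (indepFun_iff_map_prod_eq_prod_map_map hXm.aemeasurable hZm.aemeasurable).mp h
  have hpm : Measurable fun ω => (X ω, Z ω) := hXm.prodMk hZm
  have hinner : Continuous fun p : V × V => ⟪p.1, p.2⟫ := continuous_inner
  have hXid : Integrable (fun x : V => x) (μ.map X) :=
    (integrable_map_measure aestronglyMeasurable_id hXm.aemeasurable).mpr hXi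
  have hZid : Integrable (fun x : V => x) (μ.map Z) :=
    (integrable_map_measure aestronglyMeasurable_id hZm.aemeasurable).mpr hZi
  have hXn : Integrable (fun x : V => ‖x‖) (μ.map X) := hXid.norm
  have hZn : Integrable (fun x : V => ‖x‖) (μ.map Z) := hZid.norm
  have hint : Integrable (fun p : V × V => ⟪p.1, p.2⟫) ((μ.map X).prod (μ.map Z)) := by
    refine (Integrable.mul_prod hXn hZn).mono'
      (hinner.aestronglyMeasurable) (Filter.Eventually.of_forall fun p => ?_)
    simpa using abs_real_inner_le_norm p.1 p.2
  calc ∫ ω, ⟪X ω, Z ω⟫ ∂μ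
      = ∫ p, ⟪p.1, p.2⟫ ∂(μ.map (fun ω => (X ω, Z ω))) :=
        (integral_map hpm.aemeasurable hinner.aestronglyMeasurable).symm
    _ = ∫ p, ⟪p.1, p.2⟫ ∂((μ.map X).prod (μ.map Z)) := by rw [hmap]
    _ = ∫ x, ∫ y, ⟪x, y⟫ ∂(μ.map Z) ∂(μ.map X) := integral_prod _ hint
    _ = ∫ x, ⟪x, ∫ y, (y : V) ∂(μ.map Z)⟫ ∂(μ.map X) := by
        refine integral_congr_ae (Filter.Eventually.of_forall fun x => ?_)
        exact integral_inner hZid x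
    _ = ∫ x, ⟪∫ y, (y : V) ∂(μ.map Z), x⟫ ∂(μ.map X) :=
        integral_congr_ae (Filter.Eventually.of_forall fun x => real_inner_comm _ _)
    _ = ⟪∫ y, (y : V) ∂(μ.map Z), ∫ x, (x : V) ∂(μ.map X)⟫ := integral_inner hXid _
    _ = ⟪∫ x, (x : V) ∂(μ.map X), ∫ y, (y : V) ∂(μ.map Z)⟫ := real_inner_comm _ _
    _ = ⟪∫ ω, X ω ∂μ, ∫ ω, Z ω ∂μ⟫ := by
        have hX' : ∫ x, (x : V) ∂(μ.map X) = ∫ ω, X ω ∂μ :=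
          integral_map hXm.aemeasurable aestronglyMeasurable_id
        have hZ' : ∫ y, (y : V) ∂(μ.map Z) = ∫ ω, Z ω ∂μ :=
          integral_map hZm.aemeasurable aestronglyMeasurable_id
        rw [hX', hZ']

lemma mlmc_telescope (g : ℕ → V) (L : ℕ) :
    ∑ ℓ ∈ Finset.range (L + 1), (g ℓ - if ℓ = 0 then 0 else g (ℓ - 1)) = g L := by
  induction L with
  | zero => simp
  | succ n ih =>
    rw [Finset.sum_range_succ, ih, if_neg (Nat.succ_ne_zero n)]
    simp

lemma mlmc_mc_bound (W : Ω → V) (hW : MemLp W 2 μ) (X : ℕ → Ω → V)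
    (hXm : ∀ i, Measurable (X i))
    (hXid : ∀ i, IdentDistrib (X i) W μ μ)
    (hXindep : ∀ i j, i ≠ j → IndepFun (X i) (X j) μ)
    (Mn : ℕ) (hMn : 1 ≤ Mn) :
    Real.sqrt (∫ ω, ‖(∫ ω', W ω' ∂μ) - (Mn : ℝ)⁻¹ • ∑ i ∈ Finset.range Mn, X i ω‖ ^ 2 ∂μ)
      ≤ Real.sqrt (∫ ω, ‖W ω‖ ^ 2 ∂μ) / Real.sqrt Mn := by
  have hMne : (Mn : ℝ) ≠ 0 := by
    have : (0 : ℝ) < Mn := by exact_mod_cast Nat.lt_of_lt_of_le Nat.zero_lt_one hMn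
    exact ne_of_gt this
  set m : V := ∫ ω', W ω' ∂μ with hm
  have hX2 : ∀ i, MemLp (X i) 2 μ := fun i => (hXid i).symm.memLp_snd hW
  have hXint : ∀ i, Integrable (X i) μ := fun i => (hX2 i).integrable one_le_two
  have hXmean : ∀ i, ∫ ω, X i ω ∂μ = m := fun i => (hXid i).integral_eq
  set Z : ℕ → Ω → V := fun i ω => m - X i ω with hZdef
  have hZ2 : ∀ i, MemLp (Z i) 2 μ := fun i => (memLp_const m).sub (hX2 i)
  have hZint : ∀ i, Integrable (Z i) μ := fun i => (hZ2 i).integrable one_le_two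
  have hZmean : ∀ i, ∫ ω, Z i ω ∂μ = 0 := by
    intro i
    have : ∫ ω, Z i ω ∂μ = ∫ ω, (m - X i ω) ∂μ := rfl
    rw [this, integral_sub (integrable_const m) (hXint i), integral_const, hXmean i]
    simp [measure_univ]
  set I := ∫ ω, ‖W ω‖ ^ 2 ∂μ with hI
  have hI0 : 0 ≤ I := integral_nonneg fun ω => by positivity
  have hXsq : ∀ i, ∫ ω, ‖X i ω‖ ^ 2 ∂μ = I := by
    intro i
    exact ((hXid i).comp (measurable_norm.pow_const 2)).integral_eq
  have hdiag : ∀ i, ∫ ω, ⟪Z i ω, Z i ω⟫ ∂μ ≤ I := by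
    intro i
    have h1 : ∀ ω, ⟪Z i ω, Z i ω⟫ = ‖m‖ ^ 2 - 2 * ⟪m, X i ω⟫ + ‖X i ω‖ ^ 2 := by
      intro ω
      rw [real_inner_self_eq_norm_sq]
      simpa [Z] using norm_sub_sq_real m (X i ω)
    have hiInt : Integrable (fun ω => ⟪m, X i ω⟫) μ := (hXint i).const_inner m
    have hsqInt : Integrable (fun ω => ‖X i ω‖ ^ 2) μ :=
      (mlmc_integrable_inner (hX2 i) (hX2 i)).congr
        (Filter.Eventually.of_forall fun ω => real_inner_self_eq_norm_sq _)
    have h4 : Integrable (fun ω => ‖m‖ ^ 2 - 2 * ⟪m, X i ω⟫) μ := by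
      exact (integrable_const _).sub (hiInt.const_mul 2)
    calc ∫ ω, ⟪Z i ω, Z i ω⟫ ∂μ
        = ∫ ω, (‖m‖ ^ 2 - 2 * ⟪m, X i ω⟫ + ‖X i ω‖ ^ 2) ∂μ :=
          integral_congr_ae (Filter.Eventually.of_forall h1)
      _ = ‖m‖ ^ 2 - 2 * ⟪m, m⟫ + I := by
          rw [integral_add h4 hsqInt,
            integral_sub (integrable_const _) (hiInt.const_mul 2), integral_const,
            integral_const_mul, integral_inner (hXint i) m, hXmean i, hXsq i]
          simp [measure_univ]
      _ = I - ‖m‖ ^ 2 := by rw [real_inner_self_eq_norm_sq]; ring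
      _ ≤ I := by nlinarith [sq_nonneg (‖m‖ : ℝ)]
  have hoff : ∀ i j, i ≠ j → ∫ ω, ⟪Z i ω, Z j ω⟫ ∂μ = 0 := by
    intro i j hij
    have hind : IndepFun (Z i) (Z j) μ :=
      (hXindep i j hij).comp (φ := fun x : V => m - x) (ψ := fun x : V => m - x)
        (measurable_const.sub measurable_id) (measurable_const.sub measurable_id)
    have hZm : ∀ k, Measurable (Z k) := fun k => measurable_const.sub (hXm k)
    rw [mlmc_indep_integral_inner (hZm i) (hZm j) (hZint i) (hZint j) hind, hZmean i, hZmean j]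
    simp
  have hkey : ∫ ω, ‖∑ i ∈ Finset.range Mn, Z i ω‖ ^ 2 ∂μ ≤ Mn * I := by
    have hexp : ∀ ω, ‖∑ i ∈ Finset.range Mn, Z i ω‖ ^ 2
        = ∑ i ∈ Finset.range Mn, ∑ j ∈ Finset.range Mn, ⟪Z i ω, Z j ω⟫ := by
      intro ω
      rw [← real_inner_self_eq_norm_sq, sum_inner]
      exact Finset.sum_congr rfl fun i _ => inner_sum _ _ _
    have hint2 : ∀ i j, Integrable (fun ω => ⟪Z i ω, Z j ω⟫) μ := fun i j =>
      mlmc_integrable_inner (hZ2 i) (hZ2 j)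
    calc ∫ ω, ‖∑ i ∈ Finset.range Mn, Z i ω‖ ^ 2 ∂μ
        = ∫ ω, ∑ i ∈ Finset.range Mn, ∑ j ∈ Finset.range Mn, ⟪Z i ω, Z j ω⟫ ∂μ :=
          integral_congr_ae (Filter.Eventually.of_forall hexp)
      _ = ∑ i ∈ Finset.range Mn, ∑ j ∈ Finset.range Mn, ∫ ω, ⟪Z i ω, Z j ω⟫ ∂μ := by
          rw [integral_finset_sum _ (fun i _ => integrable_finset_sum _ (fun j _ => hint2 i j))]
          exact Finset.sum_congr rfl fun i _ => integral_finset_sum _ fun j _ => hint2 i j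
      _ ≤ ∑ _i ∈ Finset.range Mn, I := by
          refine Finset.sum_le_sum fun i hi => ?_
          rw [Finset.sum_eq_single i (fun j _ hji => hoff i j (Ne.symm hji))
            (fun hni => absurd hi hni)]
          exact hdiag i
      _ = Mn * I := by rw [Finset.sum_const, Finset.card_range, nsmul_eq_mul]
  have hrw : ∀ ω, ‖m - (Mn : ℝ)⁻¹ • ∑ i ∈ Finset.range Mn, X i ω‖ ^ 2
      = ((Mn : ℝ)⁻¹) ^ 2 * ‖∑ i ∈ Finset.range Mn, Z i ω‖ ^ 2 := by
    intro ω
    have h2 : m - (Mn : ℝ)⁻¹ • ∑ i ∈ Finset.range Mn, X i ω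
        = (Mn : ℝ)⁻¹ • ∑ i ∈ Finset.range Mn, Z i ω := by
      have h3 : ∑ i ∈ Finset.range Mn, Z i ω
          = (Mn : ℝ) • m - ∑ i ∈ Finset.range Mn, X i ω := by
        rw [Finset.sum_sub_distrib, Finset.sum_const, Finset.card_range,
          ← Nat.cast_smul_eq_nsmul ℝ]
      rw [h3, smul_sub, smul_smul, inv_mul_cancel₀ hMne, one_smul]
    rw [h2, norm_smul, mul_pow]
    congr 1
    rw [norm_inv, Real.norm_natCast]
  calc Real.sqrt (∫ ω, ‖m - (Mn : ℝ)⁻¹ • ∑ i ∈ Finset.range Mn, X i ω‖ ^ 2 ∂μ)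
      = Real.sqrt (((Mn : ℝ)⁻¹) ^ 2 * ∫ ω, ‖∑ i ∈ Finset.range Mn, Z i ω‖ ^ 2 ∂μ) := by
        rw [← integral_const_mul]
        exact congrArg Real.sqrt (integral_congr_ae (Filter.Eventually.of_forall hrw))
    _ ≤ Real.sqrt (((Mn : ℝ)⁻¹) ^ 2 * (Mn * I)) := by
        apply Real.sqrt_le_sqrt
        exact mul_le_mul_of_nonneg_left hkey (by positivity)
    _ = Real.sqrt (I / Mn) := by
        congr 1
        field_simp
    _ = Real.sqrt I / Real.sqrt Mn := Real.sqrt_div hI0 _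

lemma mlmc_sqrt_sub_le {f g : Ω → V} (hf : MemLp f 2 μ) (hg : MemLp g 2 μ) :
    Real.sqrt (∫ ω, ‖f ω - g ω‖ ^ 2 ∂μ)
      ≤ Real.sqrt (∫ ω, ‖f ω‖ ^ 2 ∂μ) + Real.sqrt (∫ ω, ‖g ω‖ ^ 2 ∂μ) := by
  have hg' : MemLp (fun ω => -g ω) 2 μ := by exact hg.neg
  calc Real.sqrt (∫ ω, ‖f ω - g ω‖ ^ 2 ∂μ)
      = Real.sqrt (∫ ω, ‖f ω + -g ω‖ ^ 2 ∂μ) := by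
        congr 1
        exact integral_congr_ae (Filter.Eventually.of_forall fun ω => by
          show ‖f ω - g ω‖ ^ 2 = ‖f ω + -g ω‖ ^ 2
          rw [sub_eq_add_neg])
    _ ≤ Real.sqrt (∫ ω, ‖f ω‖ ^ 2 ∂μ) + Real.sqrt (∫ ω, ‖-g ω‖ ^ 2 ∂μ) :=
        mlmc_sqrt_add_le hf hg'
    _ = Real.sqrt (∫ ω, ‖f ω‖ ^ 2 ∂μ) + Real.sqrt (∫ ω, ‖g ω‖ ^ 2 ∂μ) := by
        congr 2
        exact integral_congr_ae (Filter.Eventually.of_forall fun ω => by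
          show ‖-g ω‖ ^ 2 = ‖g ω‖ ^ 2
          rw [norm_neg])

end Aux

/-- Core multilevel Monte Carlo error estimate (Theorem 5.3): `Y ℓ i` is the `i`-th
independent sample of the level-`ℓ` correction `v ℓ - v (ℓ-1)` (with `v_{-1} = 0`),
`e ℓ` bounds the `L²(Ω;V)`-error of level `ℓ`, and `em1` bounds `‖u‖_{L²(Ω;V)}`. -/
theorem stmt12 {Ω V : Type*} [MeasurableSpace Ω] (μ : Measure Ω) [IsProbabilityMeasure μ]
    [NormedAddCommGroup V] [InnerProductSpace ℝ V] [CompleteSpace V]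
    [MeasurableSpace V] [BorelSpace V] [SecondCountableTopology V]
    (u : Ω → V) (v : ℕ → Ω → V) (L : ℕ) (e : ℕ → ℝ) (em1 : ℝ)
    (M : ℕ → ℕ) (hM : ∀ ℓ ≤ L, 1 ≤ M ℓ)
    (Y : ℕ → ℕ → Ω → V)
    (hu2 : MemLp u 2 μ) (hv2 : ∀ ℓ, MemLp (v ℓ) 2 μ)
    (hYmeas : ∀ ℓ i, Measurable (Y ℓ i))
    (hindep : iIndepFun (fun p : ℕ × ℕ => Y p.1 p.2) μ)
    (hid : ∀ ℓ i, IdentDistrib (Y ℓ i)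
      (fun ω => v ℓ ω - (if ℓ = 0 then 0 else v (ℓ - 1) ω)) μ μ)
    (he : ∀ ℓ ≤ L, Real.sqrt (∫ ω, ‖u ω - v ℓ ω‖ ^ 2 ∂μ) ≤ e ℓ)
    (hbase : Real.sqrt (∫ ω, ‖u ω‖ ^ 2 ∂μ) ≤ em1) :
    Real.sqrt (∫ ω, ‖(∫ ω', u ω' ∂μ) -
        ∑ ℓ ∈ Finset.range (L + 1), (M ℓ : ℝ)⁻¹ • ∑ i ∈ Finset.range (M ℓ), Y ℓ i ω‖ ^ 2 ∂μ)
      ≤ e L + ∑ ℓ ∈ Finset.range (L + 1),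
          (e ℓ + (if ℓ = 0 then em1 else e (ℓ - 1))) / Real.sqrt (M ℓ) := by
  classical
  set w : ℕ → Ω → V := fun ℓ ω => v ℓ ω - (if ℓ = 0 then 0 else v (ℓ - 1) ω) with hw
  have hw2 : ∀ ℓ, MemLp (w ℓ) 2 μ := by
    intro ℓ
    rcases eq_or_ne ℓ 0 with h | h
    · have h0 : w ℓ = v 0 := by funext ω; simp [hw, h]
      rw [h0]; exact hv2 0
    · have h0 : w ℓ = fun ω => v ℓ ω - v (ℓ - 1) ω := by funext ω; simp [hw, h]
      rw [h0]; exact (hv2 ℓ).sub (hv2 (ℓ - 1))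
  have hY2 : ∀ ℓ i, MemLp (Y ℓ i) 2 μ := fun ℓ i => (hid ℓ i).symm.memLp_snd (hw2 ℓ)
  set G : ℕ → Ω → V := fun ℓ ω =>
    (∫ ω', w ℓ ω' ∂μ) - (M ℓ : ℝ)⁻¹ • ∑ i ∈ Finset.range (M ℓ), Y ℓ i ω with hG
  have hG2 : ∀ ℓ, MemLp (G ℓ) 2 μ := by
    intro ℓ
    have hs : MemLp (fun ω => ∑ i ∈ Finset.range (M ℓ), Y ℓ i ω) 2 μ := by
      have h := memLp_finset_sum' (μ := μ) (p := 2) (Finset.range (M ℓ))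
        (f := fun i => Y ℓ i) (fun i _ => hY2 ℓ i)
      have he' : (∑ i ∈ Finset.range (M ℓ), Y ℓ i) = fun ω => ∑ i ∈ Finset.range (M ℓ), Y ℓ i ω := by
        funext ω; simp
      rwa [he'] at h
    have : MemLp (fun ω => (M ℓ : ℝ)⁻¹ • ∑ i ∈ Finset.range (M ℓ), Y ℓ i ω) 2 μ := by
      exact hs.const_smul _
    exact (memLp_const _).sub this
  have hlev : ∀ ℓ ≤ L, Real.sqrt (∫ ω, ‖G ℓ ω‖ ^ 2 ∂μ)
      ≤ (e ℓ + (if ℓ = 0 then em1 else e (ℓ - 1))) / Real.sqrt (M ℓ) := by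
    intro ℓ hℓ
    have hMpos : (0 : ℝ) < Real.sqrt (M ℓ) := by
      have : (1 : ℝ) ≤ (M ℓ : ℝ) := by exact_mod_cast hM ℓ hℓ
      exact Real.sqrt_pos.mpr (by linarith)
    have h1 : Real.sqrt (∫ ω, ‖G ℓ ω‖ ^ 2 ∂μ)
        ≤ Real.sqrt (∫ ω, ‖w ℓ ω‖ ^ 2 ∂μ) / Real.sqrt (M ℓ) := by
      exact mlmc_mc_bound (μ := μ) (w ℓ) (hw2 ℓ) (Y ℓ) (fun i => hYmeas ℓ i)
        (fun i => hid ℓ i)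
        (fun i j hij => hindep.indepFun (show ((ℓ, i) : ℕ × ℕ) ≠ (ℓ, j) by simp [hij]))
        (M ℓ) (hM ℓ hℓ)
    have h2 : Real.sqrt (∫ ω, ‖w ℓ ω‖ ^ 2 ∂μ) ≤ e ℓ + (if ℓ = 0 then em1 else e (ℓ - 1)) := by
      rcases eq_or_ne ℓ 0 with h | h
      · subst h
        rw [if_pos rfl]
        have h3 : Real.sqrt (∫ ω, ‖w 0 ω‖ ^ 2 ∂μ)
            = Real.sqrt (∫ ω, ‖u ω - (u ω - v 0 ω)‖ ^ 2 ∂μ) := by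
          congr 1
          refine integral_congr_ae (Filter.Eventually.of_forall fun ω => ?_)
          show ‖w 0 ω‖ ^ 2 = ‖u ω - (u ω - v 0 ω)‖ ^ 2
          have : w 0 ω = u ω - (u ω - v 0 ω) := by simp [hw]
          rw [this]
        rw [h3]
        have h4 := mlmc_sqrt_sub_le (μ := μ) (f := u) (g := fun ω => u ω - v 0 ω)
          hu2 (by exact hu2.sub (hv2 0))
        have h5 := he 0 (Nat.zero_le L)
        have h6 : Real.sqrt (∫ ω, ‖u ω - (u ω - v 0 ω)‖ ^ 2 ∂μ)
            ≤ Real.sqrt (∫ ω, ‖u ω‖ ^ 2 ∂μ) + Real.sqrt (∫ ω, ‖u ω - v 0 ω‖ ^ 2 ∂μ) := h4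
        linarith
      · rw [if_neg h]
        have h3 : Real.sqrt (∫ ω, ‖w ℓ ω‖ ^ 2 ∂μ)
            = Real.sqrt (∫ ω, ‖(u ω - v (ℓ - 1) ω) - (u ω - v ℓ ω)‖ ^ 2 ∂μ) := by
          congr 1
          refine integral_congr_ae (Filter.Eventually.of_forall fun ω => ?_)
          show ‖w ℓ ω‖ ^ 2 = ‖(u ω - v (ℓ - 1) ω) - (u ω - v ℓ ω)‖ ^ 2
          have : w ℓ ω = (u ω - v (ℓ - 1) ω) - (u ω - v ℓ ω) := by simp [hw, h]
          rw [this]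
        rw [h3]
        have h4 := mlmc_sqrt_sub_le (μ := μ) (f := fun ω => u ω - v (ℓ - 1) ω)
          (g := fun ω => u ω - v ℓ ω) (by exact hu2.sub (hv2 (ℓ - 1))) (by exact hu2.sub (hv2 ℓ))
        have h5 := he ℓ hℓ
        have h6 := he (ℓ - 1) (le_trans (Nat.sub_le ℓ 1) hℓ)
        linarith
    calc Real.sqrt (∫ ω, ‖G ℓ ω‖ ^ 2 ∂μ)
        ≤ Real.sqrt (∫ ω, ‖w ℓ ω‖ ^ 2 ∂μ) / Real.sqrt (M ℓ) := h1
      _ ≤ (e ℓ + (if ℓ = 0 then em1 else e (ℓ - 1))) / Real.sqrt (M ℓ) := by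
          gcongr
  set c : V := (∫ ω', u ω' ∂μ) - ∫ ω', v L ω' ∂μ with hc
  have hsum : ∑ ℓ ∈ Finset.range (L + 1), (∫ ω', w ℓ ω' ∂μ) = ∫ ω', v L ω' ∂μ := by
    have hm : ∀ ℓ, (∫ ω', w ℓ ω' ∂μ)
        = (∫ ω', v ℓ ω' ∂μ) - (if ℓ = 0 then 0 else ∫ ω', v (ℓ - 1) ω' ∂μ) := by
      intro ℓ
      rcases eq_or_ne ℓ 0 with h | h
      · rw [h, if_pos rfl, sub_zero]
        refine integral_congr_ae (Filter.Eventually.of_forall fun ω => ?_)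
        show w 0 ω = v 0 ω
        simp [hw]
      · rw [if_neg h]
        have h0 : (∫ ω', w ℓ ω' ∂μ) = ∫ ω', (v ℓ ω' - v (ℓ - 1) ω') ∂μ := by
          refine integral_congr_ae (Filter.Eventually.of_forall fun ω => ?_)
          show w ℓ ω = v ℓ ω - v (ℓ - 1) ω
          simp [hw, h]
        rw [h0, integral_sub ((hv2 ℓ).integrable one_le_two) ((hv2 _).integrable one_le_two)]
    rw [Finset.sum_congr rfl fun ℓ _ => hm ℓ]
    exact mlmc_telescope (fun ℓ => ∫ ω', v ℓ ω' ∂μ) L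
  have hdecomp : ∀ ω : Ω, (∫ ω', u ω' ∂μ) -
      ∑ ℓ ∈ Finset.range (L + 1), (M ℓ : ℝ)⁻¹ • ∑ i ∈ Finset.range (M ℓ), Y ℓ i ω
      = c + ∑ ℓ ∈ Finset.range (L + 1), G ℓ ω := by
    intro ω
    have h0 : ∑ ℓ ∈ Finset.range (L + 1), G ℓ ω
        = (∫ ω', v L ω' ∂μ) -
          ∑ ℓ ∈ Finset.range (L + 1), (M ℓ : ℝ)⁻¹ • ∑ i ∈ Finset.range (M ℓ), Y ℓ i ω := by
      rw [← hsum, ← Finset.sum_sub_distrib]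
    rw [h0, hc]
    abel
  have hsum2 : MemLp (fun ω => ∑ ℓ ∈ Finset.range (L + 1), G ℓ ω) 2 μ := by
    have h := memLp_finset_sum' (μ := μ) (p := 2) (Finset.range (L + 1)) (f := G)
      (fun ℓ _ => hG2 ℓ)
    have he' : (∑ ℓ ∈ Finset.range (L + 1), G ℓ)
        = fun ω => ∑ ℓ ∈ Finset.range (L + 1), G ℓ ω := by
      funext ω; simp
    rwa [he'] at h
  have hcnorm : Real.sqrt (∫ (_ : Ω), ‖c‖ ^ 2 ∂μ) ≤ e L := by
    have h1 : ∫ (_ : Ω), ‖c‖ ^ 2 ∂μ = ‖c‖ ^ 2 := by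
      rw [integral_const]; simp [measure_univ]
    rw [h1, Real.sqrt_sq (norm_nonneg _)]
    have h2 : c = ∫ ω', (u ω' - v L ω') ∂μ :=
      (integral_sub (hu2.integrable one_le_two) ((hv2 L).integrable one_le_two)).symm
    rw [h2]
    exact le_trans (mlmc_norm_integral_le (by exact hu2.sub (hv2 L))) (he L le_rfl)
  calc Real.sqrt (∫ ω, ‖(∫ ω', u ω' ∂μ) -
        ∑ ℓ ∈ Finset.range (L + 1), (M ℓ : ℝ)⁻¹ • ∑ i ∈ Finset.range (M ℓ), Y ℓ i ω‖ ^ 2 ∂μ)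
      = Real.sqrt (∫ ω, ‖(fun _ : Ω => c) ω + ∑ ℓ ∈ Finset.range (L + 1), G ℓ ω‖ ^ 2 ∂μ) := by
        congr 1
        exact integral_congr_ae (Filter.Eventually.of_forall fun ω =>
          congrArg (fun x : V => ‖x‖ ^ 2) (hdecomp ω))
    _ ≤ Real.sqrt (∫ ω, ‖(fun _ : Ω => c) ω‖ ^ 2 ∂μ)
          + Real.sqrt (∫ ω, ‖∑ ℓ ∈ Finset.range (L + 1), G ℓ ω‖ ^ 2 ∂μ) :=
        mlmc_sqrt_add_le (memLp_const c) hsum2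
    _ ≤ e L + ∑ ℓ ∈ Finset.range (L + 1),
          (e ℓ + (if ℓ = 0 then em1 else e (ℓ - 1))) / Real.sqrt (M ℓ) := by
        refine add_le_add hcnorm ?_
        exact le_trans (mlmc_sqrt_sum_le _ G fun ℓ _ => hG2 ℓ)
          (Finset.sum_le_sum fun ℓ hℓ => hlev ℓ (Nat.lt_succ_iff.mp (Finset.mem_range.mp hℓ)))
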